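/- arXiv:1707.09915 — 2 statements merged into one kernel-verified Lean document; each statement's English description precedes it below -/
import Mathlib

section
/- For every integer N ≥ 1 and every complex number s, the integral over ℝ^N of Δ_N(x)² · ∏_{j=1}^N (1+x_j²)^{-Re(s)-N} · exp(2·Im(s)·arctan(x_j)) with respect to Lebesgue measure is finite if and only if Re(s) > -1/2. (This is the normalizability condition for the Hua–Pickrell eigenvalue measure μ_HP^{s,N}.) -/
open MeasureTheory Finset

lemma hp_lintegral_fin_prod {n : ℕ} (f : Fin n → ℝ → ENNReal) (hf : ∀ i, Measurable (f i)) :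
    ∫⁻ x : Fin n → ℝ, ∏ i, f i (x i) = ∏ i, ∫⁻ x, f i x := by
  induction n with
  | zero => simp [volume_pi]
  | succ n ih =>
    have h := (measurePreserving_piFinSuccAbove (fun _ : Fin (n+1) => (volume : Measure ℝ)) 0).symm
    rw [volume_pi, ← h.lintegral_comp_emb (MeasurableEquiv.measurableEmbedding _)]
    simp_rw [MeasurableEquiv.piFinSuccAbove_symm_apply, Fin.prod_univ_succ, Fin.insertNthEquiv,
      Equiv.coe_fn_mk, Fin.insertNth_zero, Fin.cons_zero, Fin.cons_succ, cast_eq]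
    have hmeas : AEMeasurable (fun y : Fin n → ℝ => ∏ i : Fin n, f i.succ (y i))
        (Measure.pi fun _ => (volume : Measure ℝ)) :=
      (Finset.measurable_prod _ fun i _ => (hf i.succ).comp (measurable_pi_apply i)).aemeasurable
    rw [lintegral_prod_mul (hf 0).aemeasurable hmeas, ← volume_pi, ih (fun i => f i.succ) (fun i => hf i.succ)]


lemma hp_prod_pairs {N : ℕ} (f : Fin N → ℝ) :
    ∏ i : Fin N, ∏ j ∈ Ioi i, (f i * f j) = ∏ k : Fin N, f k ^ (N - 1) := by
  have h1 : ∀ i : Fin N, ∏ j ∈ Ioi i, (f i * f j) = f i ^ (Ioi i).card * ∏ j ∈ Ioi i, f j := by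
    intro i; rw [Finset.prod_mul_distrib, Finset.prod_const]
  simp_rw [h1]
  rw [Finset.prod_mul_distrib]
  have h2 : ∏ i : Fin N, ∏ j ∈ Ioi i, f j = ∏ j : Fin N, f j ^ (Iio j).card := by
    rw [Finset.prod_comm' (t' := univ) (s' := fun j => Iio j)
      (fun x y => by simp [Finset.mem_Ioi, Finset.mem_Iio])]
    simp [Finset.prod_const]
  rw [h2, ← Finset.prod_mul_distrib]
  refine Finset.prod_congr rfl fun k _ => ?_
  rw [← pow_add, Fin.card_Ioi, Fin.card_Iio]
  congr 1
  omega

lemma hp_vandermonde_le {N : ℕ} (x : Fin N → ℝ) :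
    (∏ i : Fin N, ∏ j ∈ Ioi i, (x j - x i)) ^ 2
      ≤ 2 ^ (N * N) * ∏ k : Fin N, (1 + x k ^ 2) ^ (N - 1) := by
  have key : (∏ i : Fin N, ∏ j ∈ Ioi i, (x j - x i)) ^ 2
      = ∏ i : Fin N, ∏ j ∈ Ioi i, (x j - x i) ^ 2 := by
    rw [← Finset.prod_pow]; exact Finset.prod_congr rfl fun i _ => (Finset.prod_pow _ _ _).symm
  rw [key]
  calc ∏ i : Fin N, ∏ j ∈ Ioi i, (x j - x i) ^ 2
      ≤ ∏ i : Fin N, ∏ j ∈ Ioi i, (2 * ((1 + x i ^ 2) * (1 + x j ^ 2))) := by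
        refine Finset.prod_le_prod (fun i _ => Finset.prod_nonneg fun j _ => sq_nonneg _)
          (fun i _ => Finset.prod_le_prod (fun j _ => sq_nonneg _) (fun j _ => by nlinarith [sq_nonneg (x i + x j), sq_nonneg (x i * x j)]))
    _ = ∏ i : Fin N, (2 ^ (Ioi i).card * ∏ j ∈ Ioi i, ((1 + x i ^ 2) * (1 + x j ^ 2))) := by
        refine Finset.prod_congr rfl fun i _ => ?_
        rw [Finset.prod_mul_distrib, Finset.prod_const]
    _ ≤ ∏ i : Fin N, (2 ^ N * ∏ j ∈ Ioi i, ((1 + x i ^ 2) * (1 + x j ^ 2))) := by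
        refine Finset.prod_le_prod (fun i _ => by positivity) (fun i _ => ?_)
        have : (2:ℝ) ^ (Ioi i).card ≤ 2 ^ N :=
          pow_le_pow_right₀ one_le_two (le_trans (Finset.card_le_univ _) (by simp))
        have hP : (0:ℝ) ≤ ∏ j ∈ Ioi i, ((1 + x i ^ 2) * (1 + x j ^ 2)) :=
          Finset.prod_nonneg fun j _ => by positivity
        exact mul_le_mul_of_nonneg_right this hP
    _ = 2 ^ (N * N) * ∏ i : Fin N, ∏ j ∈ Ioi i, ((1 + x i ^ 2) * (1 + x j ^ 2)) := by
        rw [Finset.prod_mul_distrib, Finset.prod_const, ← pow_mul]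
        simp [mul_comm]
    _ = 2 ^ (N * N) * ∏ k : Fin N, (1 + x k ^ 2) ^ (N - 1) := by
        rw [hp_prod_pairs (fun k => 1 + x k ^ 2)]

lemma hp_integrable {q : ℝ} (hq : q < -(1/2)) (c : ℝ) :
    Integrable (fun t : ℝ => (1 + t ^ 2) ^ q * Real.exp (c * Real.arctan t)) := by
  have hnr : ((Module.finrank ℝ ℝ : ℝ)) < -2 * q := by
    simp [Module.finrank_self]; linarith
  have h0 := integrable_rpow_neg_one_add_norm_sq (E := ℝ) (μ := volume) hnr
  have h1 : Integrable (fun t : ℝ => Real.exp (|c| * (Real.pi/2)) * (1 + ‖t‖ ^ 2) ^ (-(-2*q) / 2)) :=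
    h0.const_mul _
  refine h1.mono' ?_ (Filter.Eventually.of_forall fun t => ?_)
  · apply Continuous.aestronglyMeasurable
    apply Continuous.mul
    · apply Continuous.rpow_const (by continuity)
      intro t; left; positivity
    · exact (Real.continuous_exp.comp (continuous_const.mul Real.continuous_arctan))
  · have h2 : (1 + t ^ 2 : ℝ) ^ q ≤ (1 + ‖t‖ ^ 2) ^ (-(-2*q)/2) := by
      rw [Real.norm_eq_abs, sq_abs]
      apply le_of_eq; congr 1; ring
    have h3 : Real.exp (c * Real.arctan t) ≤ Real.exp (|c| * (Real.pi/2)) := by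
      apply Real.exp_le_exp.2
      calc c * Real.arctan t ≤ |c * Real.arctan t| := le_abs_self _
        _ = |c| * |Real.arctan t| := abs_mul _ _
        _ ≤ |c| * (Real.pi/2) := by
            exact mul_le_mul_of_nonneg_left (le_of_lt (by rw [abs_lt]; exact ⟨by simpa using Real.neg_pi_div_two_lt_arctan t, Real.arctan_lt_pi_div_two t⟩)) (abs_nonneg c)
    have hpos : (0:ℝ) ≤ (1 + t ^ 2) ^ q := Real.rpow_nonneg (by positivity) _
    rw [Real.norm_eq_abs, abs_of_nonneg (by positivity)]
    calc (1 + t ^ 2) ^ q * Real.exp (c * Real.arctan t)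
        ≤ (1 + t ^ 2) ^ q * Real.exp (|c| * (Real.pi/2)) := mul_le_mul_of_nonneg_left h3 hpos
      _ ≤ (1 + ‖t‖ ^ 2) ^ (-(-2*q)/2) * Real.exp (|c| * (Real.pi/2)) :=
          mul_le_mul_of_nonneg_right h2 (Real.exp_nonneg _)
      _ = Real.exp (|c| * (Real.pi/2)) * (1 + ‖t‖ ^ 2) ^ (-(-2*q)/2) := mul_comm _ _

lemma hp_finite (N : ℕ) (hN : 1 ≤ N) (s : ℂ) (hs : -1 / 2 < s.re) :
    (∫⁻ x : Fin N → ℝ,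
        ENNReal.ofReal
          ((∏ i : Fin N, ∏ j ∈ Finset.Ioi i, (x j - x i)) ^ 2 *
            ∏ j : Fin N,
              (1 + x j ^ 2) ^ (-s.re - (N : ℝ)) * Real.exp (2 * s.im * Real.arctan (x j)))) < ⊤ := by
  set h : ℝ → ℝ := fun t => (1 + t ^ 2) ^ (-s.re - 1) * Real.exp (2 * s.im * Real.arctan t) with hh
  have hh_nonneg : ∀ t, 0 ≤ h t := fun t =>
    mul_nonneg (Real.rpow_nonneg (by positivity) _) (Real.exp_nonneg _)
  have hq : (-s.re - 1 : ℝ) < -(1/2) := by simp at hs ⊢; linarith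
  have hint : Integrable h := hp_integrable hq _
  have hcont : Continuous h := by
    apply Continuous.mul
    · apply Continuous.rpow_const (by continuity)
      intro t; left; positivity
    · exact Real.continuous_exp.comp (continuous_const.mul Real.continuous_arctan)
  -- pointwise bound
  have hpt : ∀ x : Fin N → ℝ,
      (∏ i : Fin N, ∏ j ∈ Finset.Ioi i, (x j - x i)) ^ 2 *
          ∏ j : Fin N, (1 + x j ^ 2) ^ (-s.re - (N : ℝ)) * Real.exp (2 * s.im * Real.arctan (x j))
        ≤ 2 ^ (N * N) * ∏ j : Fin N, h (x j) := by
    intro x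
    have hwnn : (0:ℝ) ≤ ∏ j : Fin N, (1 + x j ^ 2) ^ (-s.re - (N : ℝ)) *
        Real.exp (2 * s.im * Real.arctan (x j)) :=
      Finset.prod_nonneg fun j _ =>
        mul_nonneg (Real.rpow_nonneg (by positivity) _) (Real.exp_nonneg _)
    calc (∏ i : Fin N, ∏ j ∈ Finset.Ioi i, (x j - x i)) ^ 2 *
          ∏ j : Fin N, (1 + x j ^ 2) ^ (-s.re - (N : ℝ)) * Real.exp (2 * s.im * Real.arctan (x j))
        ≤ (2 ^ (N * N) * ∏ k : Fin N, (1 + x k ^ 2) ^ (N - 1)) *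
          ∏ j : Fin N, (1 + x j ^ 2) ^ (-s.re - (N : ℝ)) * Real.exp (2 * s.im * Real.arctan (x j)) :=
          mul_le_mul_of_nonneg_right (hp_vandermonde_le x) hwnn
      _ = 2 ^ (N * N) * ∏ j : Fin N, (1 + x j ^ 2) ^ (N - 1) *
            ((1 + x j ^ 2) ^ (-s.re - (N : ℝ)) * Real.exp (2 * s.im * Real.arctan (x j))) := by
          rw [mul_assoc, ← Finset.prod_mul_distrib]
      _ = 2 ^ (N * N) * ∏ j : Fin N, h (x j) := by
          refine congrArg _ (Finset.prod_congr rfl fun j _ => ?_)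
          have hb : (0:ℝ) < 1 + x j ^ 2 := by positivity
          rw [hh, ← mul_assoc, ← Real.rpow_natCast (1 + x j ^ 2) (N - 1), ← Real.rpow_add hb]
          congr 2
          push_cast [Nat.cast_sub hN]
          ring
  calc (∫⁻ x : Fin N → ℝ, ENNReal.ofReal
          ((∏ i : Fin N, ∏ j ∈ Finset.Ioi i, (x j - x i)) ^ 2 *
            ∏ j : Fin N, (1 + x j ^ 2) ^ (-s.re - (N : ℝ)) * Real.exp (2 * s.im * Real.arctan (x j))))
      ≤ ∫⁻ x : Fin N → ℝ, ENNReal.ofReal (2 ^ (N * N) * ∏ j : Fin N, h (x j)) :=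
        lintegral_mono fun x => ENNReal.ofReal_le_ofReal (hpt x)
    _ = ∫⁻ x : Fin N → ℝ, ENNReal.ofReal (2 ^ (N * N)) * ∏ j : Fin N, ENNReal.ofReal (h (x j)) := by
        refine lintegral_congr fun x => ?_
        rw [ENNReal.ofReal_mul (by positivity), ENNReal.ofReal_prod_of_nonneg fun j _ => hh_nonneg _]
    _ = ENNReal.ofReal (2 ^ (N * N)) * ∫⁻ x : Fin N → ℝ, ∏ j : Fin N, ENNReal.ofReal (h (x j)) :=
        lintegral_const_mul' _ _ ENNReal.ofReal_ne_top
    _ = ENNReal.ofReal (2 ^ (N * N)) * ∏ j : Fin N, ∫⁻ t : ℝ, ENNReal.ofReal (h t) := by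
        rw [hp_lintegral_fin_prod (fun _ t => ENNReal.ofReal (h t))
          (fun _ => ENNReal.measurable_ofReal.comp hcont.measurable)]
    _ < ⊤ := by
        refine ENNReal.mul_lt_top ENNReal.ofReal_lt_top ?_
        exact ENNReal.prod_lt_top fun j _ => hint.lintegral_lt_top

lemma hp_divergent {r c a : ℝ} (hr : -1 ≤ r) (hc : 0 < c) (ha : 1 ≤ a) :
    ∫⁻ t in Set.Ici a, ENNReal.ofReal (c * t ^ r) = ⊤ := by
  by_contra hfin
  have hlt : (∫⁻ t in Set.Ici a, ENNReal.ofReal (c * t ^ r)) < ⊤ := lt_top_iff_ne_top.2 hfin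
  have hmeas : Measurable (fun t : ℝ => c * t ^ r) := by fun_prop
  have hnn : 0 ≤ᵐ[volume.restrict (Set.Ici a)] fun t : ℝ => c * t ^ r := by
    refine (ae_restrict_iff' measurableSet_Ici).2 (Filter.Eventually.of_forall fun t ht => ?_)
    exact mul_nonneg hc.le (Real.rpow_nonneg (le_trans (le_trans zero_le_one ha) ht) _)
  have hint : IntegrableOn (fun t : ℝ => c * t ^ r) (Set.Ici a) := by
    refine ⟨hmeas.aestronglyMeasurable, ?_⟩
    rw [hasFiniteIntegral_iff_ofReal hnn]
    exact hlt
  have hint2 : IntegrableOn (fun t : ℝ => t ^ r) (Set.Ici a) := by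
    have h := hint.const_mul c⁻¹
    have : (fun t : ℝ => c⁻¹ * (c * t ^ r)) = fun t : ℝ => t ^ r := by
      funext t; field_simp
    rwa [this] at h
  rw [integrableOn_Ici_iff_integrableOn_Ioi] at hint2
  have := (integrableOn_Ioi_rpow_iff (lt_of_lt_of_le zero_lt_one ha)).1 hint2
  linarith

lemma hp_tail_infinite (N : ℕ) (hN : 1 ≤ N) (s : ℂ) (hs : s.re ≤ -1 / 2) :
    ∫⁻ t in Set.Ici ((N : ℝ) + 1),
      ENNReal.ofReal ((9/16 : ℝ) ^ (N * N) * (t - (N : ℝ)) ^ (2 * (N - 1)) *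
        ((1 + t ^ 2) ^ (-s.re - (N : ℝ)) * Real.exp (2 * s.im * Real.arctan t))) = ⊤ := by
  have hN1 : (1:ℝ) ≤ (N:ℝ) := by exact_mod_cast hN
  set p : ℝ := -s.re - (N:ℝ) with hp
  set r : ℝ := -2 * s.re - 2 with hrdef
  have hr : -1 ≤ r := by rw [hrdef]; linarith
  set m : ℝ := min 1 ((2:ℝ) ^ p) with hm
  have hm0 : 0 < m := lt_min one_pos (Real.rpow_pos_of_pos two_pos _)
  set ε₂ : ℝ := Real.exp (-(|2 * s.im| * (Real.pi / 2))) with hε₂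
  have hε₂0 : 0 < ε₂ := Real.exp_pos _
  set c₃ : ℝ := (9/16 : ℝ) ^ (N * N) / ((N:ℝ) + 2) ^ (2 * (N - 1)) * (m * ε₂) with hc₃
  have hc₃0 : 0 < c₃ := by positivity
  have key : ∀ t ∈ Set.Ici ((N : ℝ) + 1),
      ENNReal.ofReal (c₃ * t ^ r) ≤
        ENNReal.ofReal ((9/16 : ℝ) ^ (N * N) * (t - (N : ℝ)) ^ (2 * (N - 1)) *
          ((1 + t ^ 2) ^ p * Real.exp (2 * s.im * Real.arctan t))) := by
    intro t ht
    have ht' : (N:ℝ) + 1 ≤ t := ht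
    have ht1 : (1:ℝ) ≤ t := by linarith
    have ht0 : (0:ℝ) < t := by linarith
    refine ENNReal.ofReal_le_ofReal ?_
    have hA : (t / ((N:ℝ) + 2)) ^ (2 * (N - 1)) ≤ (t - (N:ℝ)) ^ (2 * (N - 1)) := by
      refine pow_le_pow_left₀ (by positivity) ?_ _
      rw [div_le_iff₀ (by positivity)]
      nlinarith
    have hsq : (t : ℝ) ^ (2 * p) = ((t ^ 2 : ℝ)) ^ p := by
      rw [← Real.rpow_natCast t 2, ← Real.rpow_mul ht0.le]
      norm_num
    have hB : m * t ^ (2 * p) ≤ (1 + t ^ 2) ^ p := by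
      rcases le_or_gt 0 p with hp0 | hp0
      · have h1 : (t ^ 2 : ℝ) ^ p ≤ (1 + t ^ 2) ^ p :=
          Real.rpow_le_rpow (by positivity) (by linarith) hp0
        have h2 : m * t ^ (2 * p) ≤ t ^ (2 * p) := by
          have := Real.rpow_nonneg ht0.le (2 * p)
          nlinarith [min_le_left 1 ((2:ℝ) ^ p)]
        calc m * t ^ (2 * p) ≤ t ^ (2 * p) := h2
          _ = (t ^ 2 : ℝ) ^ p := hsq
          _ ≤ (1 + t ^ 2) ^ p := h1
      · have h2t : (1:ℝ) + t ^ 2 ≤ 2 * t ^ 2 := by nlinarith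
        have h1 : ((2 * t ^ 2 : ℝ)) ^ p ≤ (1 + t ^ 2) ^ p :=
          Real.rpow_le_rpow_of_nonpos (by positivity) h2t hp0.le
        have h3 : ((2 * t ^ 2 : ℝ)) ^ p = (2:ℝ) ^ p * (t ^ 2 : ℝ) ^ p :=
          Real.mul_rpow (by norm_num) (by positivity)
        have h4 : m * t ^ (2 * p) ≤ (2:ℝ) ^ p * (t ^ 2 : ℝ) ^ p := by
          rw [← hsq]
          have := Real.rpow_nonneg ht0.le (2 * p)
          nlinarith [min_le_right 1 ((2:ℝ) ^ p)]
        calc m * t ^ (2 * p) ≤ (2:ℝ) ^ p * (t ^ 2 : ℝ) ^ p := h4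
          _ = ((2 * t ^ 2 : ℝ)) ^ p := h3.symm
          _ ≤ (1 + t ^ 2) ^ p := h1
    have hC : ε₂ ≤ Real.exp (2 * s.im * Real.arctan t) := by
      rw [hε₂]
      refine Real.exp_le_exp.2 ?_
      have habs : |2 * s.im * Real.arctan t| ≤ |2 * s.im| * (Real.pi / 2) := by
        rw [abs_mul]
        refine mul_le_mul_of_nonneg_left ?_ (abs_nonneg _)
        rw [abs_le]
        exact ⟨by simpa using (Real.neg_pi_div_two_lt_arctan t).le,
          (Real.arctan_lt_pi_div_two t).le⟩
      linarith [neg_abs_le (2 * s.im * Real.arctan t)]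
    calc c₃ * t ^ r
        = (9/16 : ℝ) ^ (N * N) * (t / ((N:ℝ) + 2)) ^ (2 * (N - 1)) *
            ((m * t ^ (2 * p)) * ε₂) := by
          rw [hc₃, div_pow]
          have : (t:ℝ) ^ r = t ^ ((2 * (N - 1) : ℕ) : ℝ) * t ^ (2 * p) := by
            rw [← Real.rpow_add ht0]
            congr 1
            rw [hp, hrdef]
            push_cast [Nat.cast_sub hN]
            ring
          rw [Real.rpow_natCast] at this
          rw [this]
          ring
      _ ≤ (9/16 : ℝ) ^ (N * N) * (t - (N : ℝ)) ^ (2 * (N - 1)) *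
            ((1 + t ^ 2) ^ p * Real.exp (2 * s.im * Real.arctan t)) := by
          have hnn1 : (0:ℝ) ≤ (9/16 : ℝ) ^ (N * N) := by positivity
          have hnn2 : (0:ℝ) ≤ (t / ((N:ℝ) + 2)) ^ (2 * (N - 1)) := by positivity
          have hnn3 : (0:ℝ) ≤ m * t ^ (2 * p) :=
            mul_nonneg hm0.le (Real.rpow_nonneg ht0.le _)
          have hnn4 : (0:ℝ) ≤ ε₂ := hε₂0.le
          gcongr
          exact mul_nonneg hnn1 ((even_two_mul _).pow_nonneg _)
  have hmeas : Measurable fun t : ℝ =>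
      ENNReal.ofReal ((9/16 : ℝ) ^ (N * N) * (t - (N : ℝ)) ^ (2 * (N - 1)) *
        ((1 + t ^ 2) ^ p * Real.exp (2 * s.im * Real.arctan t))) := by
    refine ENNReal.measurable_ofReal.comp ?_
    apply Continuous.measurable
    refine Continuous.mul (by fun_prop) (Continuous.mul ?_ ?_)
    · exact Continuous.rpow_const (by fun_prop) (fun t => Or.inl (by positivity))
    · exact Real.continuous_exp.comp (continuous_const.mul Real.continuous_arctan)
  refine eq_top_iff.2 ?_
  calc (⊤ : ENNReal) = ∫⁻ t in Set.Ici ((N : ℝ) + 1), ENNReal.ofReal (c₃ * t ^ r) :=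
        (hp_divergent hr hc₃0 (by linarith)).symm
    _ ≤ _ := setLIntegral_mono' measurableSet_Ici key

lemma hp_sq_expand {N : ℕ} (x : Fin N → ℝ) :
    (∏ i : Fin N, ∏ j ∈ Ioi i, (x j - x i)) ^ 2 = ∏ i : Fin N, ∏ j ∈ Ioi i, (x j - x i) ^ 2 := by
  rw [← Finset.prod_pow]; exact Finset.prod_congr rfl fun i _ => (Finset.prod_pow _ _ _).symm

lemma hp_infinite (N : ℕ) (hN : 1 ≤ N) (s : ℂ) (hs : s.re ≤ -1 / 2) :
    (∫⁻ x : Fin N → ℝ,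
        ENNReal.ofReal
          ((∏ i : Fin N, ∏ j ∈ Finset.Ioi i, (x j - x i)) ^ 2 *
            ∏ j : Fin N,
              (1 + x j ^ 2) ^ (-s.re - (N : ℝ)) * Real.exp (2 * s.im * Real.arctan (x j)))) = ⊤ := by
  set w : ℝ → ℝ := fun t => (1 + t ^ 2) ^ (-s.re - (N : ℝ)) * Real.exp (2 * s.im * Real.arctan t)
    with hw
  have hw_pos : ∀ t, 0 < w t := fun t =>
    mul_pos (Real.rpow_pos_of_pos (by positivity) _) (Real.exp_pos _)
  have hw_cont : Continuous w := by
    refine Continuous.mul ?_ ?_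
    · exact Continuous.rpow_const (by fun_prop) (fun t => Or.inl (by positivity))
    · exact Real.continuous_exp.comp (continuous_const.mul Real.continuous_arctan)
  set L : Fin N := ⟨N - 1, by omega⟩ with hLdef
  have hL_top : ∀ j : Fin N, j ≤ L := fun j => by
    have := j.isLt
    simp only [hLdef, Fin.le_def]
    omega
  set A : Fin N → Set ℝ := fun i =>
    if i = L then Set.Ici ((N : ℝ) + 1) else Set.Icc ((i : ℝ) + 1) ((i : ℝ) + 5/4) with hA
  set g : Fin N → ℝ → ℝ := fun i t =>
    (if i = L then (9/16 : ℝ) ^ (N * N) * (t - (N : ℝ)) ^ (2 * (N - 1)) else 1) * w t with hg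
  have hg_nonneg : ∀ i t, 0 ≤ g i t := by
    intro i t
    refine mul_nonneg ?_ (hw_pos t).le
    split_ifs
    · exact mul_nonneg (by positivity) ((even_two_mul _).pow_nonneg _)
    · norm_num
  have hA_meas : ∀ i, MeasurableSet (A i) := by
    intro i; rw [hA]; dsimp only; split_ifs
    exacts [measurableSet_Ici, measurableSet_Icc]
  have hg_cont : ∀ i, Continuous (g i) := by
    intro i
    refine Continuous.mul ?_ hw_cont
    split_ifs
    · fun_prop
    · exact continuous_const
  set G : Fin N → ℝ → ENNReal := fun i => (A i).indicator fun t => ENNReal.ofReal (g i t) with hG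
  have hG_meas : ∀ i, Measurable (G i) := fun i =>
    (ENNReal.measurable_ofReal.comp (hg_cont i).measurable).indicator (hA_meas i)
  -- pointwise bound
  have hpt : ∀ x : Fin N → ℝ,
      ∏ i : Fin N, G i (x i) ≤
        ENNReal.ofReal ((∏ i : Fin N, ∏ j ∈ Finset.Ioi i, (x j - x i)) ^ 2 *
          ∏ j : Fin N, w (x j)) := by
    intro x
    by_cases hx : ∀ i, x i ∈ A i
    · have hGx : ∀ i, G i (x i) = ENNReal.ofReal (g i (x i)) := fun i =>
        Set.indicator_of_mem (hx i) _
      have step1 : ∏ i : Fin N, G i (x i) = ENNReal.ofReal (∏ i : Fin N, g i (x i)) := by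
        simp_rw [hGx]
        rw [← ENNReal.ofReal_prod_of_nonneg fun i _ => hg_nonneg i (x i)]
      rw [step1]
      refine ENNReal.ofReal_le_ofReal ?_
      -- real inequality
      have hxL : (N : ℝ) + 1 ≤ x L := by
        have h := hx L
        rw [hA] at h
        simpa using h
      have hxi : ∀ i, i ≠ L → x i ∈ Set.Icc ((i : ℝ) + 1) ((i : ℝ) + 5/4) := by
        intro i hi
        have h := hx i
        rw [hA] at h
        simpa [hi] using h
      have hi_le : ∀ i : Fin N, i ≠ L → (i : ℝ) ≤ (N : ℝ) - 2 := by
        intro i hi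
        have h1 : i.val < N - 1 := by
          rcases lt_or_eq_of_le (hL_top i) with h | h
          · simpa [hLdef, Fin.lt_def] using h
          · exact absurd h hi
        have h2 : i.val + 2 ≤ N := by omega
        have : ((i.val : ℝ)) + 2 ≤ (N : ℝ) := by exact_mod_cast h2
        linarith
      have hpair : ∀ i j : Fin N, i < j →
          (if j = L then (x L - (N : ℝ)) ^ 2 else (9/16 : ℝ)) ≤ (x j - x i) ^ 2 := by
        intro i j hij
        have hiL : i ≠ L := ne_of_lt (lt_of_lt_of_le hij (hL_top j))
        have hxiIcc := hxi i hiL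
        split_ifs with hjL
        · subst hjL
          have h1 : x i ≤ (N : ℝ) := by
            have := hxiIcc.2; have := hi_le i hiL; linarith
          have h2 : (0:ℝ) ≤ x L - N := by linarith
          have h3 : x L - N ≤ x L - x i := by linarith
          nlinarith
        · have hxjIcc := hxi j hjL
          have hij' : (i : ℝ) + 1 ≤ (j : ℝ) := by
            have : i.val + 1 ≤ j.val := hij
            exact_mod_cast this
          have h34 : (3:ℝ)/4 ≤ x j - x i := by
            have := hxjIcc.1; have := hxiIcc.2; linarith
          nlinarith
      have hprod1 : (∏ i : Fin N, ∏ j ∈ Finset.Ioi i,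
            (if j = L then (x L - (N : ℝ)) ^ 2 else (9/16 : ℝ)))
          ≤ ∏ i : Fin N, ∏ j ∈ Finset.Ioi i, (x j - x i) ^ 2 := by
        refine Finset.prod_le_prod (fun i _ => Finset.prod_nonneg fun j _ => ?_)
          (fun i _ => Finset.prod_le_prod (fun j _ => ?_) (fun j hj => hpair i j (Finset.mem_Ioi.1 hj)))
        · split_ifs; exacts [sq_nonneg _, by norm_num]
        · split_ifs; exacts [sq_nonneg _, by norm_num]
      have hIoiL : Finset.Ioi L = ∅ := by
        rw [Finset.eq_empty_iff_forall_notMem]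
        intro j hj
        exact absurd (Finset.mem_Ioi.1 hj) (not_lt.2 (hL_top j))
      have hinner : ∀ i : Fin N, i ≠ L →
          (x L - (N : ℝ)) ^ 2 * (9/16 : ℝ) ^ N ≤
            ∏ j ∈ Finset.Ioi i, (if j = L then (x L - (N : ℝ)) ^ 2 else (9/16 : ℝ)) := by
        intro i hiL
        have hLmem : L ∈ Finset.Ioi i :=
          Finset.mem_Ioi.2 (lt_of_le_of_ne (hL_top i) hiL)
        rw [← Finset.mul_prod_erase _ _ hLmem, if_pos rfl]
        refine mul_le_mul_of_nonneg_left ?_ (sq_nonneg _)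
        have hconst : (∏ j ∈ (Finset.Ioi i).erase L,
            (if j = L then (x L - (N : ℝ)) ^ 2 else (9/16 : ℝ)))
            = (9/16 : ℝ) ^ ((Finset.Ioi i).erase L).card := by
          rw [Finset.prod_congr rfl fun j hj => if_neg (Finset.ne_of_mem_erase hj),
            Finset.prod_const]
        rw [hconst]
        refine pow_le_pow_of_le_one (by norm_num) (by norm_num) ?_
        exact le_trans (Finset.card_le_univ _) (by simp)
      have houter : ((x L - (N : ℝ)) ^ 2 * (9/16 : ℝ) ^ N) ^ (N - 1) ≤
          ∏ i : Fin N, ∏ j ∈ Finset.Ioi i,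
            (if j = L then (x L - (N : ℝ)) ^ 2 else (9/16 : ℝ)) := by
        rw [← Finset.mul_prod_erase univ _ (Finset.mem_univ L), hIoiL, Finset.prod_empty, one_mul]
        calc ((x L - (N : ℝ)) ^ 2 * (9/16 : ℝ) ^ N) ^ (N - 1)
            = ∏ _i ∈ univ.erase L, ((x L - (N : ℝ)) ^ 2 * (9/16 : ℝ) ^ N) := by
              rw [Finset.prod_const, Finset.card_erase_of_mem (Finset.mem_univ L),
                Finset.card_univ, Fintype.card_fin]
          _ ≤ _ := Finset.prod_le_prod (fun i _ => by positivity)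
              (fun i hi => hinner i (Finset.ne_of_mem_erase hi))
      have hvdm : (9/16 : ℝ) ^ (N * N) * (x L - (N : ℝ)) ^ (2 * (N - 1)) ≤
          (∏ i : Fin N, ∏ j ∈ Finset.Ioi i, (x j - x i)) ^ 2 := by
        rw [hp_sq_expand]
        calc (9/16 : ℝ) ^ (N * N) * (x L - (N : ℝ)) ^ (2 * (N - 1))
            ≤ (9/16 : ℝ) ^ (N * (N - 1)) * (x L - (N : ℝ)) ^ (2 * (N - 1)) :=
              mul_le_mul_of_nonneg_right
                (pow_le_pow_of_le_one (by norm_num) (by norm_num)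
                  (Nat.mul_le_mul_left N (Nat.sub_le N 1)))
                ((even_two_mul _).pow_nonneg _)
          _ = ((x L - (N : ℝ)) ^ 2 * (9/16 : ℝ) ^ N) ^ (N - 1) := by
              rw [mul_pow, ← pow_mul, ← pow_mul, mul_comm]
          _ ≤ _ := le_trans houter hprod1
      have hsplit : ∏ i : Fin N, g i (x i) =
          ((9/16 : ℝ) ^ (N * N) * (x L - (N : ℝ)) ^ (2 * (N - 1))) * ∏ i : Fin N, w (x i) := by
        rw [hg]
        dsimp only
        rw [Finset.prod_mul_distrib]
        congr 1
        rw [Finset.prod_ite_eq' univ L (fun i => (9/16 : ℝ) ^ (N * N) * (x i - (N : ℝ)) ^ (2 * (N - 1)))]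
        simp
      rw [hsplit]
      exact mul_le_mul_of_nonneg_right hvdm
        (Finset.prod_nonneg fun i _ => (hw_pos _).le)
    · push_neg at hx
      obtain ⟨i, hi⟩ := hx
      have : G i (x i) = 0 := Set.indicator_of_notMem hi _
      rw [Finset.prod_eq_zero (Finset.mem_univ i) this]
      exact zero_le
  -- factor integrals
  have h2 : ∀ i, ∫⁻ t, G i t = ∫⁻ t in A i, ENNReal.ofReal (g i t) := by
    intro i
    simp only [hG]
    exact lintegral_indicator (hA_meas i) _
  have hL_int : ∫⁻ t, G L t = ⊤ := by
    rw [h2 L]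
    have hgL : ∀ t, g L t = (9/16 : ℝ) ^ (N * N) * (t - (N : ℝ)) ^ (2 * (N - 1)) *
        ((1 + t ^ 2) ^ (-s.re - (N : ℝ)) * Real.exp (2 * s.im * Real.arctan t)) := by
      intro t; rw [hg]; simp [hw]
    have hAL : A L = Set.Ici ((N : ℝ) + 1) := by rw [hA]; simp
    rw [hAL]
    calc ∫⁻ t in Set.Ici ((N : ℝ) + 1), ENNReal.ofReal (g L t)
        = ∫⁻ t in Set.Ici ((N : ℝ) + 1),
            ENNReal.ofReal ((9/16 : ℝ) ^ (N * N) * (t - (N : ℝ)) ^ (2 * (N - 1)) *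
              ((1 + t ^ 2) ^ (-s.re - (N : ℝ)) * Real.exp (2 * s.im * Real.arctan t))) := by
          refine lintegral_congr fun t => by rw [hgL]
      _ = ⊤ := hp_tail_infinite N hN s hs
  have hne : ∀ i : Fin N, i ≠ L → ∫⁻ t, G i t ≠ 0 := by
    intro i hi
    rw [h2 i]
    have hAi : A i = Set.Icc ((i : ℝ) + 1) ((i : ℝ) + 5/4) := by rw [hA]; simp [hi]
    set ε : ℝ := (min 1 ((1 + ((N : ℝ) + 1) ^ 2) ^ (-s.re - (N : ℝ)))) *
      Real.exp (-(|2 * s.im| * (Real.pi / 2))) with hε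
    have hε0 : 0 < ε := by
      refine mul_pos (lt_min one_pos (Real.rpow_pos_of_pos (by positivity) _)) (Real.exp_pos _)
    have hiN : (i : ℝ) ≤ (N : ℝ) - 1 := by
      have := i.isLt
      have : (i.val : ℝ) + 1 ≤ (N : ℝ) := by exact_mod_cast i.isLt
      linarith
    have hwlb : ∀ t ∈ Set.Icc ((i : ℝ) + 1) ((i : ℝ) + 5/4),
        ENNReal.ofReal ε ≤ ENNReal.ofReal (g i t) := by
      intro t ht
      refine ENNReal.ofReal_le_ofReal ?_
      have ht1 : (1:ℝ) ≤ t := by have := ht.1; have : (0:ℝ) ≤ (i:ℝ) := by positivity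
                                 linarith [ht.1]
      have ht2 : t ≤ (N : ℝ) + 1 := by have := ht.2; linarith
      have hb1 : (1:ℝ) + t ^ 2 ≤ 1 + ((N : ℝ) + 1) ^ 2 := by nlinarith
      have hrp : min 1 ((1 + ((N : ℝ) + 1) ^ 2) ^ (-s.re - (N : ℝ))) ≤
          (1 + t ^ 2) ^ (-s.re - (N : ℝ)) := by
        rcases le_or_gt 0 (-s.re - (N : ℝ)) with hp0 | hp0
        · refine le_trans (min_le_left _ _) ?_
          exact Real.one_le_rpow (by nlinarith) hp0
        · refine le_trans (min_le_right _ _) ?_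
          exact Real.rpow_le_rpow_of_nonpos (by positivity) hb1 hp0.le
      have hexp : Real.exp (-(|2 * s.im| * (Real.pi / 2))) ≤
          Real.exp (2 * s.im * Real.arctan t) := by
        refine Real.exp_le_exp.2 ?_
        have habs : |2 * s.im * Real.arctan t| ≤ |2 * s.im| * (Real.pi / 2) := by
          rw [abs_mul]
          refine mul_le_mul_of_nonneg_left ?_ (abs_nonneg _)
          rw [abs_le]
          exact ⟨by simpa using (Real.neg_pi_div_two_lt_arctan t).le,
            (Real.arctan_lt_pi_div_two t).le⟩
        linarith [neg_abs_le (2 * s.im * Real.arctan t)]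
      have : ε ≤ w t := by
        rw [hε, hw]
        refine mul_le_mul hrp hexp (Real.exp_nonneg _) (Real.rpow_nonneg (by positivity) _)
      rw [hg]
      simp only [hi, if_neg, ite_false, one_mul]
      exact this
    have hlow : ENNReal.ofReal ε * volume (Set.Icc ((i : ℝ) + 1) ((i : ℝ) + 5/4)) ≤
        ∫⁻ t in A i, ENNReal.ofReal (g i t) := by
      rw [hAi, ← setLIntegral_const]
      exact setLIntegral_mono' measurableSet_Icc hwlb
    refine ne_of_gt (lt_of_lt_of_le ?_ hlow)
    rw [Real.volume_Icc]
    have : ((i : ℝ) + 5/4) - ((i : ℝ) + 1) = 1/4 := by ring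
    rw [this]
    exact ENNReal.mul_pos (ne_of_gt (ENNReal.ofReal_pos.2 hε0))
      (ne_of_gt (ENNReal.ofReal_pos.2 (by norm_num)))
  -- assemble
  have hprod_top : ∏ i : Fin N, ∫⁻ t, G i t = ⊤ := by
    rw [← Finset.mul_prod_erase univ (fun i => ∫⁻ t, G i t) (Finset.mem_univ L), hL_int]
    rw [ENNReal.top_mul (Finset.prod_ne_zero_iff.2 fun i hi => hne i (Finset.ne_of_mem_erase hi))]
  refine eq_top_iff.2 ?_
  calc (⊤ : ENNReal) = ∏ i : Fin N, ∫⁻ t, G i t := hprod_top.symm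
    _ = ∫⁻ x : Fin N → ℝ, ∏ i : Fin N, G i (x i) := (hp_lintegral_fin_prod G hG_meas).symm
    _ ≤ ∫⁻ x : Fin N → ℝ,
        ENNReal.ofReal ((∏ i : Fin N, ∏ j ∈ Finset.Ioi i, (x j - x i)) ^ 2 *
          ∏ j : Fin N, w (x j)) := lintegral_mono hpt
    _ = _ := by rw [hw]


/-- Normalizability of the Hua–Pickrell eigenvalue measure: for `N ≥ 1` and `s ∈ ℂ`,
the integral over `ℝ^N` of `Δ_N(x)^2 ∏_j (1+x_j^2)^(-Re s - N) exp(2 Im(s) arctan x_j)`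
is finite iff `Re s > -1/2`. -/
theorem huaPickrell_eigenvalue_normalizable (N : ℕ) (hN : 1 ≤ N) (s : ℂ) :
    (∫⁻ x : Fin N → ℝ,
        ENNReal.ofReal
          ((∏ i : Fin N, ∏ j ∈ Finset.Ioi i, (x j - x i)) ^ 2 *
            ∏ j : Fin N,
              (1 + x j ^ 2) ^ (-s.re - (N : ℝ)) * Real.exp (2 * s.im * Real.arctan (x j)))) < ⊤
      ↔ -1 / 2 < s.re := by
  constructor
  · intro hlt
    by_contra hre
    push_neg at hre
    exact absurd (hp_infinite N hN s hre) hlt.ne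
  · exact hp_finite N hN s
end

section
/- Let x ∈ ℝ, s ∈ ℂ and N ∈ ℕ. With all complex powers taken as principal branch powers, (1+ix)^{−s−N} · (1−ix)^{−conj(s)−N} = (1+x²)^{−Re(s)−N} · exp(2·Im(s)·arctan(x)); in particular the left-hand side is a positive real number. (This identifies the two forms of the Hua–Pickrell density appearing in the paper.) -/
open Complex Real

/-- The two forms of the Hua–Pickrell density agree: for real `x`, complex `s` and `N : ℕ`,
with principal branch complex powers,
`(1+ix)^(-s-N) * (1-ix)^(-conj s - N) = (1+x^2)^(-Re s - N) * exp (2 Im(s) arctan x)`,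
a positive real number. -/
theorem huaPickrell_density_eq (x : ℝ) (s : ℂ) (N : ℕ) :
    (1 + Complex.I * x) ^ (-s - N) * (1 - Complex.I * x) ^ (-(starRingEnd ℂ) s - N) =
      (((1 + x ^ 2) ^ (-s.re - (N : ℝ)) * Real.exp (2 * s.im * Real.arctan x) : ℝ) : ℂ) := by
  set z : ℂ := 1 + Complex.I * x with hz
  have hre : z.re = 1 := by simp [hz]
  have him : z.im = x := by simp [hz]
  have hz0 : z ≠ 0 := fun h => by simp [h] at hre
  have habs : ‖z‖ ^ 2 = 1 + x ^ 2 := by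
    rw [Complex.sq_norm, Complex.normSq_apply, hre, him]; ring
  have harg_lt : Complex.arg z < π / 2 := Complex.arg_lt_pi_div_two_iff.2 (Or.inl (by rw [hre]; norm_num))
  have harg_gt : -(π / 2) < Complex.arg z := Complex.neg_pi_div_two_lt_arg_iff.2 (Or.inl (by rw [hre]; norm_num))
  have harg : Complex.arg z = Real.arctan x := by
    rw [← Real.arctan_tan harg_gt harg_lt, Complex.tan_arg, hre, him, div_one]
  have hargne : Complex.arg z ≠ π := ne_of_lt (harg_lt.trans (half_lt_self Real.pi_pos))
  have hconj : 1 - Complex.I * x = (starRingEnd ℂ) z := by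
    simp [hz, Complex.ext_iff]
  have hwconj : (-(starRingEnd ℂ) s - N : ℂ) = (starRingEnd ℂ) (-s - N) := by
    simp [map_sub]
  rw [hconj, hwconj, Complex.conj_cpow _ _ hargne, Complex.conj_conj,
    Complex.mul_conj]
  rw [Complex.normSq_eq_norm_sq, Complex.norm_cpow_of_ne_zero hz0]
  have hre_w : (-s - (N : ℂ)).re = -s.re - N := by simp
  have him_w : (-s - (N : ℂ)).im = -s.im := by simp
  rw [hre_w, him_w, harg]
  norm_cast
  have key : (‖z‖ ^ (-s.re - (N:ℝ))) ^ (2:ℕ) = (1 + x ^ 2) ^ (-s.re - (N:ℝ)) := by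
    rw [← Real.rpow_natCast (‖z‖ ^ _) 2, ← Real.rpow_mul (norm_nonneg z),
      mul_comm, Real.rpow_mul (norm_nonneg z), Real.rpow_natCast, habs]
  rw [div_pow, key, ← Real.exp_nat_mul,
    show ((2:ℕ):ℝ) * (Real.arctan x * -s.im) = -(2 * s.im * Real.arctan x) by push_cast; ring,
    Real.exp_neg, div_inv_eq_mul]
end
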